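/- Suppose a^{(1)}, ..., a^{(d-1)} and c^{(1)}, ..., c^{(d-1)} are vectors in Z_{>0}^d lying in the closed regions defined by ‖(n/d)·b^{(i)} − a^{(i)}‖_∞ < (n/d)·s and ‖(n/d)·b^{(i)} − c^{(i)}‖_∞ < (n/d)·s, where b^{(i)} = (1,...,1) − (1/2)e_i and s = 1/(4d+4). Assume {a^{(1)},...,a^{(d-1)}} is a Z-basis of the lattice Z^d ∩ span_R{a^{(1)},...,a^{(d-1)}}, and that ∩_{i=1}^{d-1}{x : ⟨a^{(i)},x⟩=0} = ∩_{i=1}^{d-1}{x : ⟨c^{(i)},x⟩=0} as subsets of R^d. Then a^{(j)} = c^{(j)} for all j. -/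

import Mathlib

noncomputable section

/-- `b^{(i)} = (1,…,1) - (1/2) e_i` as a vector in `ℝ^d`, for `i` among the first `d-1`
coordinates. -/
def bvec (d : ℕ) (i : Fin (d - 1)) : Fin d → ℝ :=
  fun k => if (k : ℕ) = (i : ℕ) then 1 / 2 else 1

/-- Integer vectors viewed in Euclidean space. -/
def intVecE (d m : ℕ) (v : Fin m → Fin d → ℤ) : Fin m → EuclideanSpace ℝ (Fin d) :=
  fun i => WithLp.toLp 2 (fun k => (v i k : ℝ))

theorem mem_orth_span_intVecE (d m : ℕ) (v : Fin m → Fin d → ℤ)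
    (x : EuclideanSpace ℝ (Fin d)) :
    x ∈ (Submodule.span ℝ (Set.range (intVecE d m v)))ᗮ ↔
      ∀ i, ∑ k, (v i k : ℝ) * x k = 0 := by
  rw [Submodule.mem_orthogonal]
  constructor
  · intro h i
    have := h _ (Submodule.subset_span (Set.mem_range_self i))
    simpa [intVecE, PiLp.inner_apply, RCLike.inner_apply, conj_trivial, mul_comm] using this
  · intro h u hu
    induction hu using Submodule.span_induction with
    | mem w hw =>
      obtain ⟨i, rfl⟩ := hw
      simpa [intVecE, PiLp.inner_apply, RCLike.inner_apply, conj_trivial, mul_comm] using h i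
    | zero => simp
    | add u w _ _ hu hw => rw [inner_add_left, hu, hw, add_zero]
    | smul t u _ hu => rw [inner_smul_left, hu, mul_zero]

/-- If `a^{(1)},…,a^{(d-1)}` and `c^{(1)},…,c^{(d-1)}` are positive integer vectors with
`‖(n/d)b^{(i)} - a^{(i)}‖_∞ < (n/d)s` and `‖(n/d)b^{(i)} - c^{(i)}‖_∞ < (n/d)s` where
`s = 1/(4d+4)`, the `a^{(i)}` form a `ℤ`-basis of `ℤ^d ∩ span_ℝ{a^{(i)}}`, and the two
intersections of kernel hyperplanes coincide, then `a^{(j)} = c^{(j)}` for all `j`. -/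
theorem rays_determine_normals (d n : ℕ) (hd : 2 ≤ d) (hn : 0 < n)
    (a c : Fin (d - 1) → Fin d → ℤ)
    (hapos : ∀ i k, 0 < a i k) (hcpos : ∀ i k, 0 < c i k)
    (ha : ∀ i k, |(n : ℝ) / d * bvec d i k - (a i k : ℝ)| < (n : ℝ) / d * (1 / (4 * d + 4)))
    (hc : ∀ i k, |(n : ℝ) / d * bvec d i k - (c i k : ℝ)| < (n : ℝ) / d * (1 / (4 * d + 4)))
    (hbasis : ∀ z : Fin d → ℤ,
      (fun k => (z k : ℝ)) ∈
          Submodule.span ℝ (Set.range fun i : Fin (d - 1) => fun k => ((a i k : ℝ))) →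
      ∃ α : Fin (d - 1) → ℤ, ∀ k, z k = ∑ i, α i * a i k)
    (hker : {x : Fin d → ℝ | ∀ i, ∑ k, (a i k : ℝ) * x k = 0} =
            {x : Fin d → ℝ | ∀ i, ∑ k, (c i k : ℝ) * x k = 0}) :
    a = c := by
  have hD : (2 : ℝ) ≤ (d : ℝ) := by exact_mod_cast hd
  have ht : (0 : ℝ) < (n : ℝ) / d := by positivity
  set t : ℝ := (n : ℝ) / d with ht_def
  set s : ℝ := 1 / (4 * (d : ℝ) + 4) with hs_def
  have h4 : (0 : ℝ) < 4 * (d : ℝ) + 4 := by linarith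
  have hs : 0 < s := by rw [hs_def]; positivity
  -- span equality
  have horth : (Submodule.span ℝ (Set.range (intVecE d (d - 1) a)))ᗮ
      = (Submodule.span ℝ (Set.range (intVecE d (d - 1) c)))ᗮ := by
    ext x
    rw [mem_orth_span_intVecE, mem_orth_span_intVecE]
    exact Set.ext_iff.mp hker x
  have hspan := congrArg
    (fun K : Submodule ℝ (EuclideanSpace ℝ (Fin d)) => Kᗮ) horth
  simp only [Submodule.orthogonal_orthogonal] at hspan
  funext j
  have hmemE : intVecE d (d - 1) c j ∈
      Submodule.span ℝ (Set.range (intVecE d (d - 1) a)) :=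
    hspan ▸ Submodule.subset_span (Set.mem_range_self j)
  obtain ⟨α, hα⟩ := hbasis (c j) (by
    have := Submodule.mem_map_of_mem
      (f := (WithLp.linearEquiv 2 ℝ (Fin d → ℝ)).toLinearMap) hmemE
    rw [Submodule.map_span, ← Set.range_comp] at this
    exact this)
  -- real versions
  set αr : Fin (d - 1) → ℝ := fun i => (α i : ℝ) with hαr_def
  set M : ℝ := ∑ i, |αr i| with hM_def
  have hM0 : 0 ≤ M := Finset.sum_nonneg fun i _ => abs_nonneg _
  set ε : ℝ := s * (M + 1) with hε_def
  have hε0 : 0 < ε := by rw [hε_def]; positivity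
  -- the key coordinatewise estimate
  have hkey : ∀ k, |(∑ i, αr i * bvec d i k) - bvec d j k| < ε := by
    intro k
    have hck : ((c j k : ℤ) : ℝ) = ∑ i, αr i * ((a i k : ℤ) : ℝ) := by
      rw [hα k]; push_cast; rfl
    have e1 : ∑ i, αr i * (t * bvec d i k - (a i k : ℝ))
        = t * (∑ i, αr i * bvec d i k) - ∑ i, αr i * (a i k : ℝ) := by
      rw [Finset.mul_sum, ← Finset.sum_sub_distrib]
      exact Finset.sum_congr rfl fun i _ => by ring
    have hid : t * ((∑ i, αr i * bvec d i k) - bvec d j k)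
        = (∑ i, αr i * (t * bvec d i k - (a i k : ℝ)))
          - (t * bvec d j k - (c j k : ℝ)) := by
      rw [e1, hck]; ring
    have hbound : |t * ((∑ i, αr i * bvec d i k) - bvec d j k)| < t * ε := by
      rw [hid]
      calc |(∑ i, αr i * (t * bvec d i k - (a i k : ℝ)))
              - (t * bvec d j k - (c j k : ℝ))|
          ≤ |∑ i, αr i * (t * bvec d i k - (a i k : ℝ))|
              + |t * bvec d j k - (c j k : ℝ)| := abs_sub _ _
        _ ≤ (∑ i, |αr i| * (t * s)) + |t * bvec d j k - (c j k : ℝ)| := by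
            gcongr
            refine (Finset.abs_sum_le_sum_abs _ _).trans ?_
            refine Finset.sum_le_sum fun i _ => ?_
            rw [abs_mul]
            exact mul_le_mul_of_nonneg_left (ha i k).le (abs_nonneg _)
        _ < (∑ i, |αr i| * (t * s)) + t * s := by
            gcongr
            exact hc j k
        _ = t * ε := by
            rw [← Finset.sum_mul, ← hM_def, hε_def]; ring
    rw [abs_mul, abs_of_pos ht] at hbound
    exact lt_of_mul_lt_mul_left hbound ht.le
  -- evaluate at the last coordinate
  have hlast : d - 1 < d := by omega
  set k₀ : Fin d := ⟨d - 1, hlast⟩ with hk₀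
  have hb0 : ∀ i : Fin (d - 1), bvec d i k₀ = 1 := by
    intro i
    have : (k₀ : ℕ) ≠ (i : ℕ) := by
      have := i.isLt; simp only [hk₀]; omega
    simp [bvec, this]
  set A : ℝ := ∑ i, αr i with hA_def
  have h0 : |A - 1| < ε := by
    have := hkey k₀
    simpa [hb0, hA_def] using this
  -- evaluate at coordinate i'
  have hcast : d - 1 ≤ d := Nat.sub_le d 1
  have hbk : ∀ i i' : Fin (d - 1),
      bvec d i (Fin.castLE hcast i') = if i = i' then (1 : ℝ) / 2 else 1 := by
    intro i i'
    by_cases h : i = i'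
    · simp [bvec, h]
    · have : (i' : ℕ) ≠ (i : ℕ) := fun hh => h (Fin.ext hh.symm)
      simp [bvec, this, h]
  have hsum : ∀ i' : Fin (d - 1),
      ∑ i, αr i * bvec d i (Fin.castLE hcast i') = A - αr i' / 2 := by
    intro i'
    have : ∀ i : Fin (d - 1), αr i * bvec d i (Fin.castLE hcast i')
        = αr i - (if i = i' then αr i' / 2 else 0) := by
      intro i
      rw [hbk]
      by_cases h : i = i' <;> simp [h] <;> ring
    rw [Finset.sum_congr rfl fun i _ => this i, Finset.sum_sub_distrib,
      Finset.sum_ite_eq' Finset.univ i' (fun _ => αr i' / 2)]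
    simp [hA_def]
  have hne : ∀ i' : Fin (d - 1), i' ≠ j → |αr i'| < 4 * ε := by
    intro i' hij
    have hkk := hkey (Fin.castLE hcast i')
    rw [hsum i', hbk j i', if_neg (fun h => hij h.symm)] at hkk
    rw [abs_lt] at hkk h0 ⊢
    constructor <;> linarith [hkk.1, hkk.2, h0.1, h0.2]
  have hj1 : |αr j - 1| < 4 * ε := by
    have hkk := hkey (Fin.castLE hcast j)
    rw [hsum j, hbk j j, if_pos rfl] at hkk
    rw [abs_lt] at hkk h0 ⊢
    constructor <;> linarith [hkk.1, hkk.2, h0.1, h0.2]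
  -- bound on M
  have hcard : ((Finset.univ.erase j).card : ℝ) = (d : ℝ) - 2 := by
    rw [Finset.card_erase_of_mem (Finset.mem_univ j)]
    simp only [Finset.card_univ, Fintype.card_fin]
    have : d - 1 - 1 = d - 2 := by omega
    rw [this]
    push_cast [Nat.cast_sub hd]
    ring
  have hMb : M < 1 + 4 * ε + ((d : ℝ) - 2) * (4 * ε) := by
    have hsplit : M = |αr j| + ∑ i ∈ Finset.univ.erase j, |αr i| := by
      rw [hM_def, ← Finset.add_sum_erase Finset.univ _ (Finset.mem_univ j)]
    have h1 : |αr j| < 1 + 4 * ε := by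
      rw [abs_lt] at hj1 ⊢
      constructor <;> linarith [hj1.1, hj1.2, hε0]
    have h2 : ∑ i ∈ Finset.univ.erase j, |αr i| ≤ ((d : ℝ) - 2) * (4 * ε) := by
      calc ∑ i ∈ Finset.univ.erase j, |αr i|
          ≤ (Finset.univ.erase j).card • (4 * ε) :=
            Finset.sum_le_card_nsmul _ _ _ fun i hi =>
              (hne i (Finset.ne_of_mem_erase hi)).le
        _ = ((Finset.univ.erase j).card : ℝ) * (4 * ε) := by
            rw [nsmul_eq_mul]
        _ = ((d : ℝ) - 2) * (4 * ε) := by rw [hcard]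
    linarith [hsplit, h1, h2]
  -- conclude 4ε < 1
  have hεeq : ε * (4 * (d : ℝ) + 4) = M + 1 := by
    rw [hε_def, hs_def]; field_simp
  have hMD : M < (d : ℝ) := by
    have hstep : M * (4 * (d : ℝ) + 4)
        < (1 + 4 * ε + ((d : ℝ) - 2) * (4 * ε)) * (4 * (d : ℝ) + 4) :=
      mul_lt_mul_of_pos_right hMb h4
    have hexp : (1 + 4 * ε + ((d : ℝ) - 2) * (4 * ε)) * (4 * (d : ℝ) + 4)
        = (4 * (d : ℝ) + 4) + (4 + 4 * ((d : ℝ) - 2)) * (M + 1) := by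
      linear_combination (4 + 4 * ((d : ℝ) - 2)) * hεeq
    rw [hexp] at hstep
    nlinarith [hstep]
  have h4ε : 4 * ε < 1 := by
    have h48 : (4 * ε) * (4 * (d : ℝ) + 4) = 4 * (M + 1) := by
      linear_combination 4 * hεeq
    have : (4 * ε) * (4 * (d : ℝ) + 4) < 1 * (4 * (d : ℝ) + 4) := by
      rw [h48, one_mul]; linarith
    exact lt_of_mul_lt_mul_right this h4.le
  -- integer conclusions
  have hαj : α j = 1 := by
    have h1 : |(α j : ℝ) - 1| < 1 := lt_trans hj1 h4ε
    have h2 : |α j - 1| < 1 := by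
      have : |((α j - 1 : ℤ) : ℝ)| < 1 := by push_cast; exact h1
      exact_mod_cast this
    rw [abs_lt] at h2; omega
  have hαne : ∀ i, i ≠ j → α i = 0 := by
    intro i hij
    have h1 : |(α i : ℝ)| < 1 := lt_trans (hne i hij) h4ε
    have h2 : |α i| < 1 := by exact_mod_cast h1
    rw [abs_lt] at h2; omega
  funext k
  rw [hα k]
  have : ∀ i : Fin (d - 1), α i * a i k = if i = j then a j k else 0 := by
    intro i
    by_cases h : i = j
    · rw [h, hαj, one_mul]; simp
    · rw [hαne i h, zero_mul]; simp [h]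
  rw [Finset.sum_congr rfl fun i _ => this i,
    Finset.sum_ite_eq' Finset.univ j (fun _ => a j k)]
  simp
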